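/- Let X be a real Banach space with dual X*, and let f : X → ℝ be convex, Gâteaux differentiable with gradient ∇f : X → X*, and totally convex, i.e., ν_f(x, t) > 0 for every x ∈ X and t > 0. If x₀ ∈ X and {x_n} is a sequence in X such that the sequence of real numbers {D_f(x_n, x₀)} is bounded, then the sequence {x_n} is bounded in norm. -/

import Mathlib

open Filter Topology

/-- The Bregman distance associated with `f` and its gradient map `gf`. -/
noncomputable def Df {X : Type*} [NormedAddCommGroup X] [NormedSpace ℝ X]
    (f : X → ℝ) (gf : X → X →L[ℝ] ℝ) (y x : X) : ℝ :=
  f y - f x - gf x (y - x)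

/-- The modulus of total convexity of `f` at `x`. -/
noncomputable def totalConvexityModulus {X : Type*} [NormedAddCommGroup X] [NormedSpace ℝ X]
    (f : X → ℝ) (gf : X → X →L[ℝ] ℝ) (x : X) (t : ℝ) : ℝ :=
  sInf {d : ℝ | ∃ y : X, ‖y - x‖ = t ∧ d = Df f gf y x}


lemma convexOn_comp_line {X : Type*} [NormedAddCommGroup X] [NormedSpace ℝ X]
    {f : X → ℝ} (hconv : ConvexOn ℝ Set.univ f) (x v : X) :
    ConvexOn ℝ Set.univ (fun s : ℝ => f (x + s • v)) := by
  have h := hconv.comp_affineMap (AffineMap.lineMap x (x + v))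
  have : (f ∘ ⇑(AffineMap.lineMap x (x + v))) = fun s : ℝ => f (x + s • v) := by
    funext s
    simp [AffineMap.lineMap_apply, add_comm]
  rw [this] at h
  simpa using h

lemma grad_le_sub {X : Type*} [NormedAddCommGroup X] [NormedSpace ℝ X]
    (f : X → ℝ) (gf : X → X →L[ℝ] ℝ)
    (hconv : ConvexOn ℝ Set.univ f)
    (hgf : ∀ p v : X, HasLineDerivAt ℝ f (gf p v) p v)
    (x v : X) : gf x v ≤ f (x + v) - f x := by
  set g : ℝ → ℝ := fun s => f (x + s • v) with hgdef
  have hg : ConvexOn ℝ Set.univ g := convexOn_comp_line hconv x v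
  have hd : HasDerivAt g (gf x v) 0 := hgf x v
  have hslope : Tendsto (slope g 0) (𝓝[>] 0) (𝓝 (gf x v)) :=
    (hasDerivAt_iff_tendsto_slope.mp hd).mono_left
      (nhdsWithin_mono _ (fun s hs => ne_of_gt hs))
  have hle : ∀ᶠ s in 𝓝[>] (0:ℝ), slope g 0 s ≤ g 1 - g 0 := by
    filter_upwards [Ioc_mem_nhdsGT one_pos] with s hs
    have h0 : (0:ℝ) < s := hs.1
    have h1 : s ≤ 1 := hs.2
    have hc := hg.2 (Set.mem_univ (1:ℝ)) (Set.mem_univ (0:ℝ))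
      (le_of_lt h0) (by linarith : (0:ℝ) ≤ 1 - s) (by ring)
    simp only [smul_eq_mul, mul_one, mul_zero, add_zero] at hc
    rw [slope_def_field, sub_zero, div_le_iff₀ h0]
    nlinarith [hc]
  have := le_of_tendsto hslope hle
  simpa [hgdef] using this

lemma Df_nonneg' {X : Type*} [NormedAddCommGroup X] [NormedSpace ℝ X]
    (f : X → ℝ) (gf : X → X →L[ℝ] ℝ)
    (hconv : ConvexOn ℝ Set.univ f)
    (hgf : ∀ p v : X, HasLineDerivAt ℝ f (gf p v) p v)
    (y x : X) : 0 ≤ Df f gf y x := by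
  have h := grad_le_sub f gf hconv hgf x (y - x)
  rw [add_sub_cancel] at h
  simp only [Df]
  linarith

/-- If `f` is totally convex and `{D_f(x_n, x₀)}` is bounded, then `{x_n}` is bounded. -/
theorem bounded_of_bregman_bounded
    {X : Type*} [NormedAddCommGroup X] [NormedSpace ℝ X] [CompleteSpace X]
    (f : X → ℝ) (gf : X → X →L[ℝ] ℝ)
    (hconv : ConvexOn ℝ Set.univ f)
    (hgf : ∀ p v : X, HasLineDerivAt ℝ f (gf p v) p v)
    (htc : ∀ x : X, ∀ t : ℝ, 0 < t → 0 < totalConvexityModulus f gf x t)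
    (x₀ : X) (x : ℕ → X)
    (hbdd : Bornology.IsBounded (Set.range fun n => Df f gf (x n) x₀)) :
    Bornology.IsBounded (Set.range x) := by
  obtain ⟨M, hM⟩ := isBounded_iff_forall_norm_le.mp hbdd
  have hM' : ∀ n, Df f gf (x n) x₀ ≤ M := by
    intro n
    have := hM _ ⟨n, rfl⟩
    exact (le_abs_self _).trans (by simpa [Real.norm_eq_abs] using this)
  set ν := totalConvexityModulus f gf x₀ 1 with hνdef
  have hν : 0 < ν := htc x₀ 1 one_pos
  have hbb : BddBelow {d : ℝ | ∃ y : X, ‖y - x₀‖ = 1 ∧ d = Df f gf y x₀} := by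
    refine ⟨0, fun d hd => ?_⟩
    obtain ⟨y, _, rfl⟩ := hd
    exact Df_nonneg' f gf hconv hgf y x₀
  have key : ∀ n, ‖x n - x₀‖ ≤ max 1 (M / ν) := by
    intro n
    set T := ‖x n - x₀‖ with hT
    rcases le_or_gt T 1 with h | h
    · exact h.trans (le_max_left _ _)
    · have hT0 : 0 < T := lt_trans one_pos h
      set u := x n - x₀ with hu
      set z := x₀ + T⁻¹ • u with hz
      have hz1 : ‖z - x₀‖ = 1 := by
        rw [hz, add_sub_cancel_left, norm_smul, Real.norm_eq_abs,
          abs_inv, abs_of_pos hT0, ← hT, inv_mul_cancel₀ (ne_of_gt hT0)]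
      have hmem : Df f gf z x₀ ∈ {d : ℝ | ∃ y : X, ‖y - x₀‖ = 1 ∧ d = Df f gf y x₀} :=
        ⟨z, hz1, rfl⟩
      have hν_le : ν ≤ Df f gf z x₀ := csInf_le hbb hmem
      -- convexity: Df z x₀ ≤ T⁻¹ * Df (x n) x₀
      have hg : ConvexOn ℝ Set.univ (fun s : ℝ => f (x₀ + s • u)) :=
        convexOn_comp_line hconv x₀ u
      have hTi0 : (0:ℝ) < T⁻¹ := inv_pos.mpr hT0
      have hTi1 : T⁻¹ ≤ 1 := by
        rw [inv_le_one_iff₀]; right; exact le_of_lt h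
      have hc := hg.2 (Set.mem_univ (1:ℝ)) (Set.mem_univ (0:ℝ))
        (le_of_lt hTi0) (by linarith : (0:ℝ) ≤ 1 - T⁻¹) (by ring)
      simp only [smul_eq_mul, mul_one, mul_zero, add_zero, one_smul, zero_smul] at hc
      -- hc : f (x₀ + T⁻¹ • u) ≤ T⁻¹ * f (x₀ + u) + (1 - T⁻¹) * f x₀
      have hxu : x₀ + u = x n := by rw [hu]; abel
      have hDz : Df f gf z x₀ = f (x₀ + T⁻¹ • u) - f x₀ - T⁻¹ * gf x₀ u := by
        simp only [Df, hz, add_sub_cancel_left, map_smul, smul_eq_mul]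
      have hDn : Df f gf (x n) x₀ = f (x₀ + u) - f x₀ - gf x₀ u := by
        simp only [Df, hxu, hu, add_sub_cancel]
      have hkey : ν ≤ T⁻¹ * Df f gf (x n) x₀ := by
        rw [hDn]
        calc ν ≤ Df f gf z x₀ := hν_le
        _ = f (x₀ + T⁻¹ • u) - f x₀ - T⁻¹ * gf x₀ u := hDz
        _ ≤ T⁻¹ * (f (x₀ + u) - f x₀ - gf x₀ u) := by nlinarith [hc]
      have hDM : Df f gf (x n) x₀ ≤ M := hM' n
      have : ν * T ≤ M := by
        have h1 : ν * T ≤ T⁻¹ * Df f gf (x n) x₀ * T :=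
          mul_le_mul_of_nonneg_right hkey (le_of_lt hT0)
        have h2 : T⁻¹ * Df f gf (x n) x₀ * T = Df f gf (x n) x₀ := by
          field_simp
        linarith
      have : T ≤ M / ν := by
        rw [le_div_iff₀ hν]; linarith
      exact this.trans (le_max_right _ _)
  rw [isBounded_iff_forall_norm_le]
  refine ⟨‖x₀‖ + max 1 (M / ν), ?_⟩
  rintro _ ⟨n, rfl⟩
  have := key n
  have h2 : ‖x n‖ ≤ ‖x n - x₀‖ + ‖x₀‖ := by
    simpa using norm_add_le (x n - x₀) x₀
  linarith
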